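/- Under the stated setting, the discrete signed measure with nodes X and weights w = D V m is exact on P_n for μ: for every d-variate polynomial p of total degree at most n, ∫_Ω p dμ = Σ_{i=1}^M w_i p(x_i). -/
import Mathlib


open MeasureTheory MvPolynomial

/-- Theorem 2.1 (exactness part): under the stated setting, the discrete signed
measure with nodes `X` and weights `w = D V m` is exact on `P_n` for `μ`. -/
theorem cheap_rule_exactness {d n M N : ℕ} (hMN : N ≤ M)
    (hN : N = Nat.choose (n + d) d)
    (μ lam : Measure (Fin d → ℝ)) [IsFiniteMeasure μ] [IsFiniteMeasure lam]
    (Ω B : Set (Fin d → ℝ))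
    (p : Fin N → MvPolynomial (Fin d) ℝ)
    (hdeg : ∀ j, (p j).totalDegree ≤ n)
    (horth : ∀ h k, ∫ x in B, eval x (p h) * eval x (p k) ∂lam
      = if h = k then 1 else 0)
    (hbasis : ∀ q : MvPolynomial (Fin d) ℝ, q.totalDegree ≤ n →
      ∃ c : Fin N → ℝ, q = ∑ j, c j • p j)
    (X : Fin M → (Fin d → ℝ)) (u : Fin M → ℝ)
    (hX : ∀ i, X i ∈ B) (hu : ∀ i, 0 < u i)
    (hquad : ∀ q : MvPolynomial (Fin d) ℝ, q.totalDegree ≤ 2 * n →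
      ∫ x in B, eval x q ∂lam = ∑ i, u i * eval (X i) q)
    (hint : ∀ j, IntegrableOn (fun x => eval x (p j)) Ω μ)
    (m : Fin N → ℝ) (hm : ∀ j, m j = ∫ x in Ω, eval x (p j) ∂μ)
    (w : Fin M → ℝ) (hw : ∀ i, w i = u i * ∑ j, eval (X i) (p j) * m j) :
    ∀ q : MvPolynomial (Fin d) ℝ, q.totalDegree ≤ n →
      ∫ x in Ω, eval x q ∂μ = ∑ i, w i * eval (X i) q := by

  intro q hq
  obtain ⟨c, hc⟩ := hbasis q hq
  have key : ∀ j k, ∑ i, u i * (eval (X i) (p j) * eval (X i) (p k))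
      = if j = k then (1:ℝ) else 0 := by
    intro j k
    have hd : (p j * p k).totalDegree ≤ 2 * n := by
      calc (p j * p k).totalDegree ≤ (p j).totalDegree + (p k).totalDegree :=
            totalDegree_mul _ _
        _ ≤ n + n := Nat.add_le_add (hdeg j) (hdeg k)
        _ = 2 * n := (two_mul n).symm
    have h1 := hquad (p j * p k) hd
    simp only [map_mul] at h1
    rw [← h1]
    exact horth j k
  have heval : ∀ x, eval x q = ∑ j, c j * eval x (p j) := by
    intro x; rw [hc]; simp [smul_eq_mul]
  have hL : ∫ x in Ω, eval x q ∂μ = ∑ j, c j * m j := by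
    rw [show (fun x => eval x q) = fun x => ∑ j, c j * eval x (p j) from
      funext heval]
    rw [integral_finset_sum _ (fun j _ => ((hint j).const_mul (c j)))]
    refine Finset.sum_congr rfl fun j _ => ?_
    rw [integral_const_mul, hm j]
  rw [hL]
  have hR : ∑ i, w i * eval (X i) q
      = ∑ j, ∑ k, m k * c j * ∑ i, u i * (eval (X i) (p k) * eval (X i) (p j)) := by
    simp only [hw, heval, Finset.mul_sum, Finset.sum_mul]
    rw [Finset.sum_comm]
    refine Finset.sum_congr rfl fun j _ => ?_
    rw [Finset.sum_comm]
    refine Finset.sum_congr rfl fun k _ => ?_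
    refine Finset.sum_congr rfl fun i _ => ?_
    ring
  rw [hR]
  simp [key, Finset.mul_sum, mul_comm]
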